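/- Let q = 2^t with t ≥ 1 and let m ≥ 1. Then {x ∈ F_{q^m}^* : Tr_{F_{q^m}/F_2}(x^{−1}) = 1} = {λ + λ^{−1} : λ ∈ U_{q^m+1}, λ ≠ 1}, where U_{q^m+1} is the subgroup of F_{q^{2m}}^* of order q^m+1. -/

import Mathlib

open Finset

private lemma telescope_sum {K : Type*} [Field K] [CharP K 2] (n : ℕ) (μ : K) :
    ∑ i ∈ Finset.range n, (μ ^ 2 + μ) ^ (2 ^ i) = μ ^ (2 ^ n) + μ := by
  haveI : Fact (Nat.Prime 2) := ⟨Nat.prime_two⟩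
  have h : ∀ i, (μ ^ 2 + μ) ^ (2 ^ i) = μ ^ (2 ^ (i + 1)) - μ ^ (2 ^ i) := by
    intro i
    rw [CharTwo.sub_eq_add, add_pow_char_pow, ← pow_mul]
    congr 2
    rw [pow_succ, mul_comm]
  simp_rw [h]
  rw [Finset.sum_range_sub (fun i => μ ^ (2 ^ i)), pow_zero, pow_one, CharTwo.sub_eq_add]

private lemma artin_schreier_surj {K : Type*} [Field K] [Fintype K] [CharP K 2]
    {N : ℕ} (hN : 1 ≤ N) (hcardK : Fintype.card K = 2 ^ N)
    {a : K} (ha : ∑ i ∈ Finset.range N, a ^ (2 ^ i) = 0) :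
    ∃ μ : K, μ ^ 2 + μ = a := by
  classical
  haveI : Fact (Nat.Prime 2) := ⟨Nat.prime_two⟩
  have h2 : (2 : K) = 0 := CharTwo.two_eq_zero
  set f : K → K := fun μ => μ ^ 2 + μ with hf
  set S : Finset K :=
    Finset.univ.filter (fun b : K => ∑ i ∈ Finset.range N, b ^ (2 ^ i) = 0) with hSdef
  set I : Finset K := Finset.univ.image f with hIdef
  have hIS : I ⊆ S := by
    intro b hb
    obtain ⟨μ, -, rfl⟩ := Finset.mem_image.mp hb
    refine Finset.mem_filter.mpr ⟨Finset.mem_univ _, ?_⟩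
    show ∑ i ∈ Finset.range N, (μ ^ 2 + μ) ^ (2 ^ i) = 0
    rw [telescope_sum, ← hcardK, FiniteField.pow_card, CharTwo.add_self_eq_zero]
  have hcount : Fintype.card K ≤ 2 * I.card := by
    have h := Finset.card_le_mul_card_image (f := f) Finset.univ 2 ?_
    · simpa [Finset.card_univ] using h
    · intro b hb
      obtain ⟨μ₀, -, hμ₀⟩ := Finset.mem_image.mp hb
      have hsub : (Finset.univ.filter fun x : K => f x = b) ⊆ {μ₀, μ₀ + 1} := by
        intro x hx
        have hfx' : x ^ 2 + x = μ₀ ^ 2 + μ₀ := by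
          have := (Finset.mem_filter.mp hx).2
          rw [← hμ₀] at this
          exact this
        have hd : (x + μ₀) * (x + μ₀ + 1) = 0 := by
          linear_combination hfx' + (μ₀ ^ 2 + μ₀ + x * μ₀) * h2
        rcases mul_eq_zero.mp hd with h | h
        · have hx' : x = μ₀ := by linear_combination h - μ₀ * h2
          simp [hx']
        · have hx' : x = μ₀ + 1 := by linear_combination h - (μ₀ + 1) * h2
          simp [hx']
      calc (Finset.univ.filter fun x : K => f x = b).card
          ≤ ({μ₀, μ₀ + 1} : Finset K).card := Finset.card_le_card hsub
        _ ≤ 2 := (Finset.card_insert_le _ _).trans (by simp)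
  have hIcard : 2 ^ (N - 1) ≤ I.card := by
    have hle : 2 * 2 ^ (N - 1) ≤ 2 * I.card := by
      have hNN : N - 1 + 1 = N := Nat.succ_pred_eq_of_pos hN
      calc 2 * 2 ^ (N - 1) = 2 ^ (N - 1 + 1) := (pow_succ' 2 (N - 1)).symm
        _ = Fintype.card K := by rw [hNN, hcardK]
        _ ≤ 2 * I.card := hcount
    omega
  have hScard : S.card ≤ 2 ^ (N - 1) := by
    set P : Polynomial K := ∑ i ∈ Finset.range N, Polynomial.X ^ (2 ^ i) with hPdef
    have hPc : P.coeff 1 = 1 := by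
      rw [hPdef, Polynomial.finset_sum_coeff]
      rw [Finset.sum_eq_single 0]
      · simp
      · intro i _ hi
        rw [Polynomial.coeff_X_pow]
        have h1 : (2 : ℕ) ^ i ≠ 1 := (Nat.one_lt_two_pow_iff.mpr hi).ne'
        simp [Ne.symm h1]
      · intro h; exact absurd (Finset.mem_range.mpr hN) h
    have hPne : P ≠ 0 := by
      intro h0
      rw [h0] at hPc; simp at hPc
    have hPdeg : P.natDegree ≤ 2 ^ (N - 1) := by
      apply Polynomial.natDegree_sum_le_of_forall_le
      intro i hi
      rw [Polynomial.natDegree_X_pow]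
      exact Nat.pow_le_pow_right (by norm_num) (by
        have := Finset.mem_range.mp hi; omega)
    have hsub : S ⊆ P.roots.toFinset := by
      intro b hb
      rw [Multiset.mem_toFinset, Polynomial.mem_roots hPne]
      have hb' := (Finset.mem_filter.mp hb).2
      simp only [Polynomial.IsRoot, hPdef, Polynomial.eval_finset_sum,
        Polynomial.eval_pow, Polynomial.eval_X]
      exact hb'
    calc S.card ≤ P.roots.toFinset.card := Finset.card_le_card hsub
      _ ≤ Multiset.card P.roots := Multiset.toFinset_card_le _
      _ ≤ P.natDegree := Polynomial.card_roots' P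
      _ ≤ 2 ^ (N - 1) := hPdeg
  have hSI : I = S := Finset.eq_of_subset_of_card_le hIS (hScard.trans hIcard)
  have haS : a ∈ S := Finset.mem_filter.mpr ⟨Finset.mem_univ _, ha⟩
  rw [← hSI] at haS
  obtain ⟨μ, -, hμ⟩ := Finset.mem_image.mp haS
  exact ⟨μ, hμ⟩

/-- In `F_{q^{2m}}` with `q = 2^t`, the set of nonzero elements `x` of the
subfield `F_{q^m}` with absolute trace `Tr_{F_{q^m}/F_2}(x⁻¹) = 1` coincides
with the set `{λ + λ⁻¹ : λ ∈ U_{q^m+1}, λ ≠ 1}`. -/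
theorem trace_one_iff_lambda_plus_inv (t m : ℕ) (ht : 1 ≤ t) (hm : 1 ≤ m)
    (q : ℕ) (hq : q = 2 ^ t) {K : Type*} [Field K] [Fintype K]
    (hcard : Fintype.card K = q ^ (2 * m)) :
    {x : K | x ≠ 0 ∧ x ^ (q ^ m) = x ∧
        (∑ i ∈ Finset.range (t * m), (x⁻¹) ^ (2 ^ i)) = 1} =
      {y : K | ∃ l : K, l ^ (q ^ m + 1) = 1 ∧ l ≠ 1 ∧ y = l + l⁻¹} := by
  classical
  set n := t * m with hn
  have hn1 : 1 ≤ n := Nat.mul_pos ht hm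
  have hqm : q ^ m = 2 ^ n := by rw [hq, ← pow_mul]
  have hcard2 : Fintype.card K = 2 ^ (n + n) := by
    rw [hcard, hq, ← pow_mul]
    congr 1
    rw [hn]; ring
  haveI hchar : CharP K 2 := by
    have hc0 : (Fintype.card K : K) = 0 := FiniteField.cast_card_eq_zero K
    have hdvd : ringChar K ∣ Fintype.card K :=
      (CharP.cast_eq_zero_iff K (ringChar K) _).mp hc0
    have hpp : (ringChar K).Prime := CharP.char_is_prime K (ringChar K)
    have hr2 : ringChar K = 2 := by
      have hdvd2 : ringChar K ∣ 2 := hpp.dvd_of_dvd_pow (hcard2 ▸ hdvd)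
      exact (Nat.prime_dvd_prime_iff_eq hpp Nat.prime_two).mp hdvd2
    exact hr2 ▸ ringChar.charP K
  haveI : Fact (Nat.Prime 2) := ⟨Nat.prime_two⟩
  have h2 : (2 : K) = 0 := CharTwo.two_eq_zero
  ext y
  simp only [Set.mem_setOf_eq]
  constructor
  · rintro ⟨hy0, hyF, hTr⟩
    rw [hqm] at hyF
    have hyinvF : (y⁻¹) ^ (2 ^ n) = y⁻¹ := by rw [inv_pow, hyF]
    have hsq : (∑ i ∈ Finset.range n, (y⁻¹) ^ (2 ^ i)) ^ 2
        = ∑ i ∈ Finset.range n, ((y⁻¹) ^ 2) ^ (2 ^ i) := by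
      rw [CharTwo.sum_sq]
      refine Finset.sum_congr rfl fun i _ => ?_
      rw [← pow_mul, ← pow_mul, mul_comm]
    have hTa : ∑ i ∈ Finset.range n, ((y⁻¹) ^ 2) ^ (2 ^ i) = 1 := by
      rw [← hsq, hTr, one_pow]
    have hbF : ((y⁻¹) ^ 2) ^ (2 ^ n) = (y⁻¹) ^ 2 := by
      rw [← pow_mul, mul_comm, pow_mul, hyinvF]
    have hsum2n : ∑ i ∈ Finset.range (n + n), ((y⁻¹) ^ 2) ^ (2 ^ i) = 0 := by
      rw [Finset.sum_range_add]
      have hshift : ∀ i, ((y⁻¹) ^ 2) ^ (2 ^ (n + i)) = ((y⁻¹) ^ 2) ^ (2 ^ i) := by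
        intro i
        rw [pow_add, pow_mul, hbF]
      simp_rw [hshift, hTa]
      exact CharTwo.add_self_eq_zero _
    obtain ⟨μ, hμ⟩ := artin_schreier_surj (by omega) hcard2 hsum2n
    have hμpow : μ ^ (2 ^ n) + μ = 1 := by
      rw [← telescope_sum n μ]
      simp_rw [hμ]
      exact hTa
    have hμn : μ ^ (2 ^ n) = μ + 1 := by linear_combination hμpow - μ * h2
    set l := y * μ with hl
    have hl1 : l * (l + y) = 1 := by
      have expand : l * (l + y) = y ^ 2 * (μ ^ 2 + μ) := by rw [hl]; ring
      rw [expand, hμ, ← mul_pow, mul_inv_cancel₀ hy0, one_pow]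
    have hlne0 : l ≠ 0 := left_ne_zero_of_mul_eq_one hl1
    have hlinv : l⁻¹ = l + y := inv_eq_of_mul_eq_one_right hl1
    have hlpow : l ^ (2 ^ n) = l + y := by
      rw [hl, mul_pow, hyF, hμn]; ring
    refine ⟨l, ?_, ?_, ?_⟩
    · rw [hqm, pow_succ, hlpow, ← hlinv, inv_mul_cancel₀ hlne0]
    · intro h1
      rw [h1, inv_one] at hlinv
      exact hy0 (by linear_combination -hlinv)
    · rw [hlinv]
      linear_combination -(l * h2)
  · rintro ⟨l, h1, hlne1, rfl⟩
    rw [hqm] at h1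
    have hl0 : l ≠ 0 := by
      intro h
      rw [h, zero_pow (by positivity)] at h1
      exact zero_ne_one h1
    have hinvl : l * l⁻¹ = 1 := mul_inv_cancel₀ hl0
    have hlinv : l ^ (2 ^ n) = l⁻¹ := by
      have hh : l ^ (2 ^ n) * l = 1 := by rw [← pow_succ]; exact h1
      exact eq_inv_of_mul_eq_one_left hh
    set y := l + l⁻¹ with hy
    have hy0 : y ≠ 0 := by
      intro h
      rw [hy] at h
      have hsq0 : (l + 1) ^ 2 = 0 := by
        rw [CharTwo.add_sq, one_pow]
        linear_combination l * h - hinvl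
      have hl1' : l + 1 = 0 := pow_eq_zero_iff (two_ne_zero) |>.mp hsq0
      exact hlne1 (by linear_combination hl1' - h2)
    have hyy : y * y⁻¹ = 1 := mul_inv_cancel₀ hy0
    have hyF : y ^ (2 ^ n) = y := by
      rw [hy, add_pow_char_pow, inv_pow, hlinv, inv_inv, add_comm l⁻¹ l]
    have hyinvF : (y⁻¹) ^ (2 ^ n) = y⁻¹ := by rw [inv_pow, hyF]
    have key : l ^ 2 + l * y = 1 := by
      rw [hy]
      linear_combination hinvl + l ^ 2 * h2
    have hμ : (l * y⁻¹) ^ 2 + l * y⁻¹ = (y⁻¹) ^ 2 := by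
      linear_combination (y⁻¹) ^ 2 * key - l * y⁻¹ * hyy
    have hsq : (∑ i ∈ Finset.range n, (y⁻¹) ^ (2 ^ i)) ^ 2
        = ∑ i ∈ Finset.range n, ((y⁻¹) ^ 2) ^ (2 ^ i) := by
      rw [CharTwo.sum_sq]
      refine Finset.sum_congr rfl fun i _ => ?_
      rw [← pow_mul, ← pow_mul, mul_comm]
    have hT2 : (∑ i ∈ Finset.range n, (y⁻¹) ^ (2 ^ i)) ^ 2 = 1 := by
      rw [hsq, ← hμ]
      rw [telescope_sum n (l * y⁻¹), mul_pow, hlinv, hyinvF]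
      have hre : l⁻¹ * y⁻¹ + l * y⁻¹ = (l + l⁻¹) * y⁻¹ := by ring
      rw [hre, ← hy, hyy]
    refine ⟨hy0, by rw [hqm]; exact hyF, ?_⟩
    set T := ∑ i ∈ Finset.range n, (y⁻¹) ^ (2 ^ i) with hT
    have hT10 : (T + 1) ^ 2 = 0 := by
      rw [CharTwo.add_sq, one_pow, hT2, CharTwo.add_self_eq_zero]
    have hT1 : T + 1 = 0 := pow_eq_zero_iff (two_ne_zero) |>.mp hT10
    linear_combination hT1 - h2
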